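/- Assume (A1) and define H_* = { Σ_{k≥0} α_k Π1_k ∈ H : α_k > 0 for all k }, where the sum is required to converge in H. Then H_* ∩ H_1 is nonempty. Moreover, for any positive decreasing sequence u = (u_m): (i) for any positive C_0 there are elements of H_* ∩ H_1 which also belong to C(u,C_0,1), and hence to C(u,C_0,r) for any positive integer r; (ii) there exists a positive constant C_0 such that there are elements of H_* ∩ H_1 which also belong to C(u,C_0,0). -/

import Mathlib

/- Proposition 5 of Roueff–Rydén: under (A1), with
`H_* = {Σ_k α_k Π1_k ∈ H : α_k > 0 ∀ k}` (convergence of partial sums in `H`),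
`H_* ∩ H₁ ≠ ∅`; moreover for any positive decreasing sequence `u`:
(i) for any `C₀ > 0` there are elements of `H_* ∩ H₁` in `C(u,C₀,1)` (hence in `C(u,C₀,r)`
for every `r ≥ 1`); (ii) there exists `C₀ > 0` such that some element of `H_* ∩ H₁`
belongs to `C(u,C₀,0)`. -/

open MeasureTheory ENNReal Filter

noncomputable section

/-- `V_m = span(Π 1_k, 0 ≤ k < m)`. -/
def Vspan {α : Type*} [MeasurableSpace α] {ν : Measure α} (Pi1 : ℕ → Lp ℝ 2 ν) (m : ℕ) :
    Submodule ℝ (Lp ℝ 2 ν) :=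
  Submodule.span ℝ (Pi1 '' Set.Iio m)

/-- The approximation class `C(u,C,r)`. -/
def classV {α : Type*} [MeasurableSpace α] {ν : Measure α} (Pi1 : ℕ → Lp ℝ 2 ν)
    (u : ℕ → ℝ) (C : ℝ) (r : ℕ) : Set (Lp ℝ 2 ν) :=
  {f | ∀ m, r ≤ m → Metric.infDist f (Vspan Pi1 m : Set (Lp ℝ 2 ν)) ≤ C * u m}

/-- Probability densities belonging to `H`. -/
def H1 {α : Type*} [MeasurableSpace α] (ν : Measure α) : Set (Lp ℝ 2 ν) :=
  {f | 0 ≤ᵐ[ν] ⇑f ∧ ∫ θ, f θ ∂ν = 1}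

/-- `H_*`: sums `Σ_k α_k Π1_k` converging in `H`, with all `α_k > 0`. -/
def Hstar {α : Type*} [MeasurableSpace α] {ν : Measure α} (Pi1 : ℕ → Lp ℝ 2 ν) :
    Set (Lp ℝ 2 ν) :=
  {f | ∃ a : ℕ → ℝ, (∀ k, 0 < a k) ∧
    Tendsto (fun M => ∑ k ∈ Finset.range M, a k • Pi1 k) atTop (nhds f)}

set_option maxHeartbeats 2000000 in
private lemma key_lemma
    {α : Type*} [MeasurableSpace α] {ν : Measure α}
    (π : α → ℕ → ℝ)
    (hπ_meas : ∀ k, Measurable fun θ => π θ k)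
    (hπ_nonneg : ∀ θ k, 0 ≤ π θ k)
    (Pi1 : ℕ → Lp ℝ 2 ν) (hPi1 : ∀ k, ⇑(Pi1 k) =ᵐ[ν] fun θ => π θ k)
    (hPi1_int : ∀ k, Integrable (fun θ => π θ k) ν)
    (hPi1_li : LinearIndependent ℝ Pi1)
    (u : ℕ → ℝ) (hu_pos : ∀ m, 0 < u m) (hu_dec : Antitone u)
    (ε : ℝ) (hε : 0 < ε) :
    ∃ f, f ∈ Hstar Pi1 ∩ H1 ν ∧ f ∈ classV Pi1 u ε 1 := by
  classical
  -- the masses `c k = ∫ π θ k dν` are positive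
  set c : ℕ → ℝ := fun k => ∫ θ, π θ k ∂ν with hc_def
  have hc_nonneg : ∀ k, 0 ≤ c k := fun k => integral_nonneg fun θ => hπ_nonneg θ k
  have hc_pos : ∀ k, 0 < c k := by
    intro k
    rcases (hc_nonneg k).lt_or_eq with h | h
    · exact h
    exfalso
    have h0 : (fun θ => π θ k) =ᵐ[ν] 0 :=
      (integral_eq_zero_iff_of_nonneg (fun θ => hπ_nonneg θ k) (hPi1_int k)).mp h.symm
    exact hPi1_li.ne_zero k (Lp.ext ((hPi1 k).trans (h0.trans (Lp.coeFn_zero ℝ 2 ν).symm)))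
  set nk : ℕ → ℝ := fun k => ‖Pi1 k‖ with hnk_def
  have hnk_nonneg : ∀ k, 0 ≤ nk k := fun k => norm_nonneg _
  set w : ℕ → ℝ := fun k => nk k + c k + 1 with hw_def
  have hw_pos : ∀ k, 0 < w k := by
    intro k
    have := hnk_nonneg k; have := hc_pos k
    simp only [hw_def]; linarith
  set β : ℕ → ℝ := fun k => (2:ℝ)⁻¹ ^ k * u k / w k with hβ_def
  have hβ_pos : ∀ k, 0 < β k := fun k =>
    div_pos (mul_pos (by positivity) (hu_pos k)) (hw_pos k)
  have hβw : ∀ k, β k * w k = (2:ℝ)⁻¹ ^ k * u k := by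
    intro k
    rw [hβ_def]; exact div_mul_cancel₀ _ (hw_pos k).ne'
  have hβnk : ∀ k, β k * nk k ≤ (2:ℝ)⁻¹ ^ k * u k := by
    intro k
    calc β k * nk k ≤ β k * w k := by
          refine mul_le_mul_of_nonneg_left ?_ (hβ_pos k).le
          have := hc_pos k; simp only [hw_def]; linarith
      _ = _ := hβw k
  have hβc : ∀ k, β k * c k ≤ (2:ℝ)⁻¹ ^ k * u k := by
    intro k
    calc β k * c k ≤ β k * w k := by
          refine mul_le_mul_of_nonneg_left ?_ (hβ_pos k).le
          have := hnk_nonneg k; simp only [hw_def]; linarith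
      _ = _ := hβw k
  have hgeo : Summable (fun k : ℕ => (2:ℝ)⁻¹ ^ k * u k) := by
    refine Summable.of_nonneg_of_le (fun k => mul_nonneg (by positivity) (hu_pos k).le)
      (f := fun k => u 0 * (2:ℝ)⁻¹ ^ k) (fun k => ?_) ?_
    · rw [mul_comm]
      exact mul_le_mul_of_nonneg_right (hu_dec (Nat.zero_le k)) (by positivity)
    · exact (summable_geometric_of_lt_one (by norm_num) (by norm_num)).mul_left _
  have hβc_summ : Summable (fun k => β (k+1) * c (k+1)) := by
    refine Summable.of_nonneg_of_le
      (fun k => mul_nonneg (hβ_pos (k+1)).le (hc_nonneg (k+1))) (fun k => hβc (k+1)) ?_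
    exact (summable_nat_add_iff 1).mpr hgeo
  set L : ℝ := ∑' k, β (k+1) * c (k+1) with hL_def
  have hL_nonneg : 0 ≤ L :=
    tsum_nonneg fun k => mul_nonneg (hβ_pos (k+1)).le (hc_nonneg (k+1))
  set s : ℝ := min ε (1 / (L + 1)) with hs_def
  have hs_pos : 0 < s := lt_min hε (by positivity)
  have hs_le : s ≤ ε := min_le_left _ _
  have hsL : s * L < 1 := by
    have h1 : s * L ≤ (1 / (L + 1)) * L :=
      mul_le_mul_of_nonneg_right (min_le_right _ _) hL_nonneg
    have h2 : (1 / (L + 1)) * L < 1 := by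
      rw [div_mul_eq_mul_div, one_mul, div_lt_one (by linarith)]
      linarith
    linarith
  set a : ℕ → ℝ := fun k => if k = 0 then (1 - s * L) / c 0 else s * β k with ha_def
  have ha_pos : ∀ k, 0 < a k := by
    intro k
    simp only [ha_def]
    split
    · exact div_pos (by linarith) (hc_pos 0)
    · exact mul_pos hs_pos (hβ_pos k)
  have ha_succ : ∀ k, a (k+1) = s * β (k+1) := fun k => by simp [ha_def]
  have ha_nk_succ : ∀ k, a (k+1) * nk (k+1) ≤ s * ((2:ℝ)⁻¹ ^ (k+1) * u (k+1)) := by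
    intro k
    rw [ha_succ, mul_assoc]
    exact mul_le_mul_of_nonneg_left (hβnk (k+1)) hs_pos.le
  -- summability in `Lp`
  have hnorm_eq : ∀ k, ‖a k • Pi1 k‖ = a k * nk k := by
    intro k
    rw [norm_smul, Real.norm_eq_abs, abs_of_pos (ha_pos k)]
  have hnksum : Summable (fun k => a k * nk k) := by
    refine (summable_nat_add_iff 1).mp ?_
    refine Summable.of_nonneg_of_le
      (fun k => mul_nonneg (ha_pos (k+1)).le (hnk_nonneg (k+1))) (fun k => ha_nk_succ k) ?_
    exact (((summable_nat_add_iff 1).mpr hgeo).mul_left s)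
  have hnorm_summ : Summable (fun k => ‖a k • Pi1 k‖) := by
    simpa only [hnorm_eq] using hnksum
  have hsumm : Summable (fun k => a k • Pi1 k) := Summable.of_norm hnorm_summ
  set f : Lp ℝ 2 ν := ∑' k, a k • Pi1 k with hf_def
  have hhas : HasSum (fun k => a k • Pi1 k) f := hsumm.hasSum
  have htend : Tendsto (fun M => ∑ k ∈ Finset.range M, a k • Pi1 k) atTop (nhds f) :=
    hhas.tendsto_sum_nat
  -- the approximation class property
  have hclass : f ∈ classV Pi1 u ε 1 := by
    intro m hm
    have hmem : (∑ k ∈ Finset.range m, a k • Pi1 k) ∈ (Vspan Pi1 m : Set (Lp ℝ 2 ν)) :=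
      Submodule.sum_mem _ fun k hk =>
        Submodule.smul_mem _ _ (Submodule.subset_span ⟨k, Finset.mem_range.mp hk, rfl⟩)
    refine le_trans (Metric.infDist_le_dist_of_mem hmem) ?_
    rw [dist_eq_norm]
    have htail : f - ∑ k ∈ Finset.range m, a k • Pi1 k = ∑' i, a (i+m) • Pi1 (i+m) := by
      have h := Summable.sum_add_tsum_nat_add (f := fun k => a k • Pi1 k) m hsumm
      rw [← hf_def] at h
      rw [← h]; abel
    rw [htail]
    have htailsumm : Summable (fun i => a (i+m) * nk (i+m)) := (summable_nat_add_iff m).mpr hnksum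
    have h1 : ‖∑' i, a (i+m) • Pi1 (i+m)‖ ≤ ∑' i, a (i+m) * nk (i+m) := by
      have := norm_tsum_le_tsum_norm (f := fun i => a (i+m) • Pi1 (i+m))
        (by simpa only [hnorm_eq] using htailsumm)
      simpa only [hnorm_eq] using this
    refine le_trans h1 ?_
    have hRsumm : Summable (fun i : ℕ => ε * u m * (2:ℝ)⁻¹ ^ (i+1)) := by
      exact (((summable_nat_add_iff 1).mpr
        (summable_geometric_of_lt_one (by norm_num) (by norm_num))).mul_left _)
    have hterm : ∀ i : ℕ, a (i+m) * nk (i+m) ≤ ε * u m * (2:ℝ)⁻¹ ^ (i+1) := by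
      intro i
      obtain ⟨j, hj⟩ : ∃ j, i + m = j + 1 := ⟨i + m - 1, by omega⟩
      rw [hj]
      calc a (j+1) * nk (j+1) ≤ s * ((2:ℝ)⁻¹ ^ (j+1) * u (j+1)) := ha_nk_succ j
        _ ≤ ε * ((2:ℝ)⁻¹ ^ (i+1) * u m) := by
            refine mul_le_mul hs_le ?_
              (mul_nonneg (by positivity) (hu_pos (j+1)).le) hε.le
            refine mul_le_mul ?_ (hu_dec (by omega)) (hu_pos _).le (by positivity)
            exact pow_le_pow_of_le_one (by norm_num) (by norm_num) (by omega)
        _ = ε * u m * (2:ℝ)⁻¹ ^ (i+1) := by ring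
    refine le_trans (Summable.tsum_le_tsum hterm htailsumm hRsumm) ?_
    have : (∑' i : ℕ, ε * u m * (2:ℝ)⁻¹ ^ (i+1)) = ε * u m := by
      rw [tsum_mul_left]
      have h2 : (∑' i : ℕ, (2:ℝ)⁻¹ ^ (i+1)) = 1 := by
        have := tsum_geometric_of_lt_one (r := (2:ℝ)⁻¹) (by norm_num) (by norm_num)
        calc (∑' i : ℕ, (2:ℝ)⁻¹ ^ (i+1)) = ∑' i : ℕ, (2:ℝ)⁻¹ * (2:ℝ)⁻¹ ^ i := by
              refine tsum_congr fun i => ?_; ring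
          _ = (2:ℝ)⁻¹ * ∑' i : ℕ, (2:ℝ)⁻¹ ^ i := tsum_mul_left
          _ = 1 := by rw [this]; norm_num
      rw [h2, mul_one]
    rw [this]
  -- partial sums as genuine functions
  set S : ℕ → Lp ℝ 2 ν := fun M => ∑ k ∈ Finset.range M, a k • Pi1 k with hS_def
  set g : ℕ → α → ℝ := fun M θ => ∑ k ∈ Finset.range M, a k * π θ k with hg_def
  have hSg : ∀ M, ⇑(S M) =ᵐ[ν] g M := by
    intro M
    induction M with
    | zero =>
      have h0 : S 0 = 0 := by simp [hS_def]
      rw [h0]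
      filter_upwards [Lp.coeFn_zero ℝ 2 ν] with θ hθ
      simpa [hg_def] using hθ
    | succ M ih =>
      have h1 : S (M+1) = S M + a M • Pi1 M := by simp [hS_def, Finset.sum_range_succ]
      rw [h1]
      filter_upwards [Lp.coeFn_add (S M) (a M • Pi1 M), Lp.coeFn_smul (a M) (Pi1 M), ih,
        hPi1 M] with θ h2 h3 h4 h5
      simp only [hg_def, Finset.sum_range_succ]
      rw [h2]
      simp only [Pi.add_apply]
      rw [h4, h3]
      simp only [Pi.smul_apply, smul_eq_mul, h5]
      rfl
  have hg_mono : ∀ θ, Monotone fun M => g M θ := by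
    intro θ
    refine monotone_nat_of_le_succ fun M => ?_
    simp only [hg_def, Finset.sum_range_succ]
    have : 0 ≤ a M * π θ M := mul_nonneg (ha_pos M).le (hπ_nonneg θ M)
    linarith
  have hg_nonneg : ∀ M θ, 0 ≤ g M θ := fun M θ =>
    Finset.sum_nonneg fun k _ => mul_nonneg (ha_pos k).le (hπ_nonneg θ k)
  -- a.e. convergence of the partial sums to `f`
  haveI : Fact ((1:ℝ≥0∞) ≤ 2) := ⟨one_le_two⟩
  have htendS : Tendsto S atTop (nhds f) := htend
  have htend2 : Tendsto (fun M => eLpNorm (⇑(S M) - ⇑f) 2 ν) atTop (nhds 0) :=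
    (Lp.tendsto_Lp_iff_tendsto_eLpNorm' S f).mp htendS
  have hTIM : TendstoInMeasure ν (fun M => ⇑(S M)) atTop ⇑f :=
    tendstoInMeasure_of_tendsto_eLpNorm (p := 2) two_ne_zero
      (fun M => Lp.aestronglyMeasurable _) (Lp.aestronglyMeasurable f) htend2
  obtain ⟨ns, hns_mono, hns_ae⟩ := hTIM.exists_seq_tendsto_ae
  have hSg_all : ∀ᵐ θ ∂ν, ∀ M, S M θ = g M θ := ae_all_iff.mpr hSg
  have h_ae_tendsto : ∀ᵐ θ ∂ν, Tendsto (fun M => g M θ) atTop (nhds (f θ)) := by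
    filter_upwards [hns_ae, hSg_all] with θ h1 h2
    have h3 : Tendsto (fun i => g (ns i) θ) atTop (nhds (f θ)) := by
      simpa only [h2] using h1
    rcases tendsto_of_monotone (hg_mono θ) with h4 | ⟨l, h4⟩
    · exact absurd (h4.comp hns_mono.tendsto_atTop) (not_tendsto_atTop_of_tendsto_nhds h3)
    · have h5 : Tendsto (fun i => g (ns i) θ) atTop (nhds l) := h4.comp hns_mono.tendsto_atTop
      rwa [← tendsto_nhds_unique h3 h5] at h4
  have hf_nonneg : 0 ≤ᵐ[ν] ⇑f := by
    filter_upwards [h_ae_tendsto] with θ h1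
    exact ge_of_tendsto' h1 fun M => hg_nonneg M θ
  -- integrals of the partial sums
  have hgk_int : ∀ k, Integrable (fun θ => a k * π θ k) ν := fun k => (hPi1_int k).const_mul _
  have hg_int : ∀ M, Integrable (g M) ν := fun M => integrable_finset_sum _ fun k _ => hgk_int k
  have hg_integral : ∀ M, ∫ θ, g M θ ∂ν = ∑ k ∈ Finset.range M, a k * c k := by
    intro M
    rw [integral_finset_sum _ fun k _ => hgk_int k]
    exact Finset.sum_congr rfl fun k _ => integral_const_mul _ _
  -- the coefficients sum to one against the masses
  have hac_summ : Summable (fun k => a k * c k) := by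
    refine (summable_nat_add_iff 1).mp ?_
    refine Summable.of_nonneg_of_le
      (fun k => mul_nonneg (ha_pos (k+1)).le (hc_nonneg (k+1)))
      (fun k => ?_) (((summable_nat_add_iff 1).mpr hgeo).mul_left s)
    rw [ha_succ, mul_assoc]
    exact mul_le_mul_of_nonneg_left (hβc (k+1)) hs_pos.le
  have hac_tsum : (∑' k, a k * c k) = 1 := by
    rw [Summable.tsum_eq_zero_add hac_summ]
    have h1 : a 0 * c 0 = 1 - s * L := by
      simp only [ha_def, if_pos rfl]
      rw [div_mul_cancel₀ _ (hc_pos 0).ne']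
    have h2 : (∑' k : ℕ, a (k+1) * c (k+1)) = s * L := by
      have : ∀ k : ℕ, a (k+1) * c (k+1) = s * (β (k+1) * c (k+1)) := by
        intro k; rw [ha_succ]; ring
      rw [tsum_congr this, tsum_mul_left, hL_def]
    rw [h1, h2]; ring
  have hac_sum : HasSum (fun k => a k * c k) 1 := hac_tsum ▸ hac_summ.hasSum
  have ht_tendsto : Tendsto (fun M => ∑ k ∈ Finset.range M, a k * c k) atTop (nhds 1) :=
    hac_sum.tendsto_sum_nat
  -- the lintegral of `f` is one
  have hint : ∫⁻ θ, ENNReal.ofReal (f θ) ∂ν = 1 := by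
    have hmeasg : ∀ M, Measurable fun θ => ENNReal.ofReal (g M θ) := fun M =>
      (Finset.measurable_sum _ fun k _ => (hπ_meas k).const_mul _).ennreal_ofReal
    have hmono : Monotone fun M => (fun θ => ENNReal.ofReal (g M θ)) := fun M N h θ =>
      ENNReal.ofReal_le_ofReal (hg_mono θ h)
    have h1 : ∫⁻ θ, ⨆ M, ENNReal.ofReal (g M θ) ∂ν = ⨆ M, ∫⁻ θ, ENNReal.ofReal (g M θ) ∂ν :=
      lintegral_iSup hmeasg hmono
    have h2 : ∀ M, ∫⁻ θ, ENNReal.ofReal (g M θ) ∂ν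
        = ENNReal.ofReal (∑ k ∈ Finset.range M, a k * c k) := by
      intro M
      rw [← ofReal_integral_eq_lintegral_ofReal (hg_int M)
        (Eventually.of_forall fun θ => hg_nonneg M θ), hg_integral M]
    have hmono2 : Monotone fun M => ENNReal.ofReal (∑ k ∈ Finset.range M, a k * c k) := by
      intro M N h
      refine ENNReal.ofReal_le_ofReal ?_
      refine Finset.sum_le_sum_of_subset_of_nonneg (Finset.range_subset_range.mpr h)
        fun k _ _ => mul_nonneg (ha_pos k).le (hc_nonneg k)
    have h3 : (⨆ M, ENNReal.ofReal (∑ k ∈ Finset.range M, a k * c k)) = 1 := by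
      have hcont : Tendsto (fun M => ENNReal.ofReal (∑ k ∈ Finset.range M, a k * c k)) atTop
          (nhds (ENNReal.ofReal 1)) := (ENNReal.continuous_ofReal.tendsto 1).comp ht_tendsto
      have := tendsto_nhds_unique (tendsto_atTop_iSup hmono2) hcont
      simpa using this
    have h4 : ∀ᵐ θ ∂ν, ENNReal.ofReal (f θ) = ⨆ M, ENNReal.ofReal (g M θ) := by
      filter_upwards [h_ae_tendsto] with θ h
      have hcont : Tendsto (fun M => ENNReal.ofReal (g M θ)) atTop
          (nhds (ENNReal.ofReal (f θ))) := (ENNReal.continuous_ofReal.tendsto _).comp h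
      have hm : Monotone fun M => ENNReal.ofReal (g M θ) := fun _ _ h' =>
        ENNReal.ofReal_le_ofReal (hg_mono θ h')
      exact tendsto_nhds_unique hcont (tendsto_atTop_iSup hm)
    calc ∫⁻ θ, ENNReal.ofReal (f θ) ∂ν
        = ∫⁻ θ, ⨆ M, ENNReal.ofReal (g M θ) ∂ν := lintegral_congr_ae h4
      _ = ⨆ M, ∫⁻ θ, ENNReal.ofReal (g M θ) ∂ν := h1
      _ = ⨆ M, ENNReal.ofReal (∑ k ∈ Finset.range M, a k * c k) := by
          exact iSup_congr h2
      _ = 1 := h3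
  have hf_integral : ∫ θ, f θ ∂ν = 1 := by
    rw [integral_eq_lintegral_of_nonneg_ae hf_nonneg (Lp.aestronglyMeasurable f), hint]
    simp
  exact ⟨f, ⟨⟨a, ha_pos, htend⟩, hf_nonneg, hf_integral⟩, hclass⟩

theorem statement8
    {d : ℕ} {Θ : Set (Fin d → ℝ)} (hΘ : MeasurableSet Θ)
    (ν : Measure Θ) [SigmaFinite ν]
    (π : Θ → ℕ → ℝ)
    (hπ_meas : ∀ k, Measurable fun θ => π θ k)
    (hπ_nonneg : ∀ θ k, 0 ≤ π θ k)
    (hπ_sum : ∀ θ, HasSum (fun k => π θ k) 1)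
    -- (A1)
    (Pi1 : ℕ → Lp ℝ 2 ν) (hPi1 : ∀ k, ⇑(Pi1 k) =ᵐ[ν] fun θ => π θ k)
    (hPi1_int : ∀ k, Integrable (fun θ => π θ k) ν)
    (hPi1_li : LinearIndependent ℝ Pi1)
    (u : ℕ → ℝ) (hu_pos : ∀ m, 0 < u m) (hu_dec : Antitone u) :
    (Hstar Pi1 ∩ H1 ν).Nonempty ∧
    (∀ C₀ : ℝ, 0 < C₀ → ∃ f, f ∈ Hstar Pi1 ∩ H1 ν ∧
      ∀ r : ℕ, 1 ≤ r → f ∈ classV Pi1 u C₀ r) ∧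
    (∃ C₀ : ℝ, 0 < C₀ ∧ ∃ f, f ∈ Hstar Pi1 ∩ H1 ν ∧ f ∈ classV Pi1 u C₀ 0) := by
  obtain ⟨f1, hf1, hf1c⟩ := key_lemma π hπ_meas hπ_nonneg Pi1 hPi1 hPi1_int hPi1_li
    u hu_pos hu_dec 1 one_pos
  refine ⟨⟨f1, hf1⟩, ?_, ?_⟩
  · intro C₀ hC₀
    obtain ⟨f, hf, hfc⟩ := key_lemma π hπ_meas hπ_nonneg Pi1 hPi1 hPi1_int hPi1_li
      u hu_pos hu_dec C₀ hC₀
    exact ⟨f, hf, fun r hr m hm => hfc m (le_trans hr hm)⟩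
  · refine ⟨max 1 (‖f1‖ / u 0), lt_of_lt_of_le one_pos (le_max_left _ _), f1, hf1, ?_⟩
    intro m _
    rcases Nat.eq_zero_or_pos m with rfl | hm
    · have hV : (Vspan Pi1 0 : Set (Lp ℝ 2 ν)) = {0} := by
        have h0 : Set.Iio (0:ℕ) = ∅ := by ext x; simp
        simp [Vspan, h0]
      rw [hV, Metric.infDist_singleton, dist_zero_right]
      calc ‖f1‖ = ‖f1‖ / u 0 * u 0 := (div_mul_cancel₀ _ (hu_pos 0).ne').symm
        _ ≤ max 1 (‖f1‖ / u 0) * u 0 :=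
          mul_le_mul_of_nonneg_right (le_max_right 1 _) (hu_pos 0).le
    · calc Metric.infDist f1 (Vspan Pi1 m : Set (Lp ℝ 2 ν)) ≤ 1 * u m := hf1c m hm
        _ ≤ max 1 (‖f1‖ / u 0) * u m :=
          mul_le_mul_of_nonneg_right (le_max_left _ _) (hu_pos m).le

end
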